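/- Let G = (V,E) be a graph with Laplacian eigenvalues 0 = μ₁ ≤ μ₂ ≤ ... ≤ μ_{|V|}, let M = min{i : μ_i > μ₂}, and let U be the direct sum of the μ₁- and μ₂-eigenspaces of the Laplacian L. If S ⊆ V satisfies e(S, Sᶜ) ≤ μ₂·|S||Sᶜ|/|V| + γ|S| for some γ ≥ 0, then ‖𝟙_S − P_U(𝟙_S)‖² ≤ (γ/(μ_M − μ₂)) · |S|/|V|, where the norm is induced by the inner product ⟨f,g⟩ = (1/|V|)∑_{v∈V} f(v)g(v) and P_U is orthogonal projection onto U. -/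

import Mathlib

open Finset

lemma parseval_pair {V : Type*} [Fintype V] (B : OrthonormalBasis V ℝ (EuclideanSpace ℝ V))
    (x y : V → ℝ) :
    ∑ i, (∑ v, B i v * x v) * (∑ v, B i v * y v) = ∑ v, x v * y v := by
  have h := B.sum_inner_mul_inner (WithLp.toLp 2 x : EuclideanSpace ℝ V) (WithLp.toLp 2 y : EuclideanSpace ℝ V)
  simp only [PiLp.inner_apply, RCLike.inner_apply, starRingEnd_apply, star_trivial] at h
  rw [Finset.sum_congr rfl fun v _ => mul_comm (x v) (y v), ← h]
  refine Finset.sum_congr rfl fun i _ => ?_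
  congr 1
  exact Finset.sum_congr rfl fun v _ => mul_comm _ _

lemma symm_swap {V : Type*} [Fintype V] {A : Matrix V V ℝ} (hA : A.IsSymm) (x y : V → ℝ) :
    ∑ v, (A.mulVec x) v * y v = ∑ v, x v * (A.mulVec y) v := by
  simp only [Matrix.mulVec, dotProduct, Finset.sum_mul, Finset.mul_sum]
  rw [Finset.sum_comm]
  refine Finset.sum_congr rfl fun v _ => Finset.sum_congr rfl fun w _ => ?_
  rw [hA.apply v w]
  ring

lemma eigen_swap {V : Type*} [Fintype V] [DecidableEq V] {A : Matrix V V ℝ}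
    (hA : A.IsHermitian) (i : V) (x : V → ℝ) :
    ∑ v, hA.eigenvectorBasis i v * (A.mulVec x) v
      = hA.eigenvalues i * ∑ v, hA.eigenvectorBasis i v * x v := by
  have hs : A.IsSymm := by
    have := hA
    rwa [Matrix.IsHermitian, Matrix.conjTranspose_eq_transpose_of_trivial] at this
  rw [← symm_swap hs]
  have hev : A.mulVec (fun v => hA.eigenvectorBasis i v) = fun v => hA.eigenvalues i * hA.eigenvectorBasis i v := by
    have := hA.mulVec_eigenvectorBasis i
    exact this
  rw [hev]
  simp [Finset.mul_sum, mul_assoc]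

lemma quad_eq_cut {V : Type*} [Fintype V] [DecidableEq V] (G : SimpleGraph V)
    [DecidableRel G.Adj] (S : Finset V) :
    ∑ v, (if v ∈ S then (1:ℝ) else 0) * ((G.lapMatrix ℝ).mulVec (fun v => if v ∈ S then (1:ℝ) else 0)) v
      = (((S ×ˢ Sᶜ).filter fun p => G.Adj p.1 p.2).card : ℝ) := by
  set f : V → ℝ := fun v => if v ∈ S then (1:ℝ) else 0 with hf
  have h1 : ∑ v, f v * ((G.lapMatrix ℝ).mulVec f) v = Matrix.toLinearMap₂' ℝ (G.lapMatrix ℝ) f f := by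
    rw [Matrix.toLinearMap₂'_apply']
    rfl
  rw [h1, SimpleGraph.lapMatrix_toLinearMap₂']
  have hcard : ∀ (T U : Finset V), (∑ i : V, ∑ j : V, if (i ∈ T ∧ j ∈ U ∧ G.Adj i j) then (1:ℝ) else 0)
      = (((T ×ˢ U).filter fun p => G.Adj p.1 p.2).card : ℝ) := by
    intro T U
    rw [Finset.card_filter]
    push_cast
    rw [Finset.sum_product]
    simp only [ite_and]
    simp [Finset.sum_ite_mem, Finset.univ_inter]
  have key : (∑ i : V, ∑ j : V, if G.Adj i j then (f i - f j)^2 else 0)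
      = 2 * (((S ×ˢ Sᶜ).filter fun p => G.Adj p.1 p.2).card : ℝ) := by
    have step : ∀ i j : V, (if G.Adj i j then (f i - f j)^2 else 0)
        = (if (i ∈ S ∧ j ∈ Sᶜ ∧ G.Adj i j) then (1:ℝ) else 0)
          + (if (j ∈ S ∧ i ∈ Sᶜ ∧ G.Adj i j) then (1:ℝ) else 0) := by
      intro i j
      by_cases hi : i ∈ S <;> by_cases hj : j ∈ S <;> by_cases ha : G.Adj i j <;>
        simp [hf, hi, hj, ha, Finset.mem_compl]
    simp only [step, Finset.sum_add_distrib]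
    have hswap : (∑ i : V, ∑ j : V, if (j ∈ S ∧ i ∈ Sᶜ ∧ G.Adj i j) then (1:ℝ) else 0)
        = ∑ i : V, ∑ j : V, if (i ∈ S ∧ j ∈ Sᶜ ∧ G.Adj i j) then (1:ℝ) else 0 := by
      rw [Finset.sum_comm]
      refine Finset.sum_congr rfl fun j _ => Finset.sum_congr rfl fun i _ => ?_
      exact if_congr (by rw [G.adj_comm]) rfl rfl
    rw [hswap, hcard S Sᶜ]
    ring
  rw [key]
  ring

theorem laplacian_isoperimetry_stability {V : Type*} [Fintype V] [DecidableEq V]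
    (G : SimpleGraph V) [DecidableRel G.Adj]
    (hcard : 2 ≤ Fintype.card V)
    (μ : Fin (Fintype.card V) → ℝ) (hmono : Monotone μ)
    (e : Fin (Fintype.card V) ≃ V)
    (heig : ∀ i, μ i = (SimpleGraph.posSemidef_lapMatrix ℝ G).1.eigenvalues (e i))
    (hμ1 : μ ⟨0, by omega⟩ = 0)
    (M : Fin (Fintype.card V))
    (hMgt : μ ⟨1, by omega⟩ < μ M)
    (hMmin : ∀ i, μ ⟨1, by omega⟩ < μ i → M ≤ i)
    (S : Finset V) (γ : ℝ) (hγ : 0 ≤ γ)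
    (hedge : (((S ×ˢ Sᶜ).filter fun p => G.Adj p.1 p.2).card : ℝ) ≤
      μ ⟨1, by omega⟩ * S.card * Sᶜ.card / Fintype.card V + γ * S.card)
    (U : Submodule ℝ (V → ℝ))
    (hU : U = Module.End.eigenspace (Matrix.toLin' (G.lapMatrix ℝ)) (μ ⟨0, by omega⟩) ⊔
      Module.End.eigenspace (Matrix.toLin' (G.lapMatrix ℝ)) (μ ⟨1, by omega⟩))
    (P : V → ℝ) (hPU : P ∈ U)
    (hPorth : ∀ u ∈ U, ∑ v : V, ((if v ∈ S then (1:ℝ) else 0) - P v) * u v = 0) :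
    (1 / (Fintype.card V : ℝ)) * ∑ v : V, ((if v ∈ S then (1:ℝ) else 0) - P v) ^ 2 ≤
      γ / (μ M - μ ⟨1, by omega⟩) * (S.card / Fintype.card V) := by
  classical
  have hpsd := SimpleGraph.posSemidef_lapMatrix ℝ G
  have hL : (G.lapMatrix ℝ).IsHermitian := hpsd.1
  set B := hL.eigenvectorBasis with hB
  set lam := hL.eigenvalues with hlamdef
  set i0 : Fin (Fintype.card V) := ⟨0, by omega⟩ with hi0
  set i1 : Fin (Fintype.card V) := ⟨1, by omega⟩ with hi1
  set f : V → ℝ := fun v => if v ∈ S then (1:ℝ) else 0 with hf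
  set g : V → ℝ := fun v => f v - P v with hg
  set d : V → ℝ := fun i => ∑ v, B i v * f v with hd
  set c : V → ℝ := fun i => ∑ v, B i v * g v with hc
  set n : ℝ := (Fintype.card V : ℝ) with hn
  have hn0 : (0:ℝ) < n := by
    rw [hn]; exact_mod_cast lt_of_lt_of_le (by norm_num) hcard
  -- eigenvalue identification
  have hlam : ∀ i : V, lam i = μ (e.symm i) := by
    intro i
    rw [heig (e.symm i), Equiv.apply_symm_apply]
  have hμ2nn : 0 ≤ μ i1 := by
    rw [← hμ1]
    exact hmono (by rw [hi0, hi1]; exact Fin.mk_le_mk.mpr (by omega))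
  have hlam0 : lam (e i0) = 0 := by
    rw [hlam, Equiv.symm_apply_apply, hμ1]
  have hlamge : ∀ i : V, i ≠ e i0 → μ i1 ≤ lam i := by
    intro i hi
    rw [hlam]
    have h0 : e.symm i ≠ i0 := fun h => hi (by rw [← h, Equiv.apply_symm_apply])
    have hv1 : i1.val = 1 := rfl
    have hv0 : i0.val = 0 := rfl
    refine hmono (Fin.le_def.mpr ?_)
    by_contra h
    exact h0 (Fin.ext (by omega))
  have hlamnn : ∀ i : V, 0 ≤ lam i := fun i => hpsd.eigenvalues_nonneg i
  have hMge : ∀ i : V, μ i1 < lam i → μ M ≤ lam i := by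
    intro i h
    rw [hlam] at h ⊢
    exact hmono (hMmin _ h)
  -- membership of eigenvectors in U
  have hBeig : ∀ i : V, Matrix.toLin' (G.lapMatrix ℝ) (fun v => B i v) = fun v => lam i * B i v := by
    intro i
    rw [Matrix.toLin'_apply]
    exact hL.mulVec_eigenvectorBasis i
  have hBmem : ∀ i : V, lam i ≤ μ i1 → (fun v => B i v) ∈ U := by
    intro i hle
    rw [hU]
    by_cases hi : i = e i0
    · refine Submodule.mem_sup_left (Module.End.mem_eigenspace_iff.mpr ?_)
      rw [hBeig i, hi, hlam0, hμ1]
      funext v; simp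
    · have h1 : lam i = μ i1 := le_antisymm hle (hlamge i hi)
      refine Submodule.mem_sup_right (Module.End.mem_eigenspace_iff.mpr ?_)
      rw [hBeig i, ← h1]
      funext v; simp
  have hcz : ∀ i : V, lam i ≤ μ i1 → c i = 0 := by
    intro i hle
    have h := hPorth (fun v => B i v) (hBmem i hle)
    simp only [hc]
    rw [← h]
    refine Finset.sum_congr rfl fun v _ => ?_
    simp only [hg, hf]
    ring
  -- orthogonality of high eigenvectors to U
  have hpz : ∀ i : V, μ i1 < lam i → ∑ v, B i v * P v = 0 := by
    intro i hgt
    have horth : ∀ (ν : ℝ) (u : V → ℝ),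
        u ∈ Module.End.eigenspace (Matrix.toLin' (G.lapMatrix ℝ)) ν → ν ≠ lam i →
        ∑ v, B i v * u v = 0 := by
      intro ν u hu hne
      have heq : (G.lapMatrix ℝ).mulVec u = fun v => ν * u v := by
        have := Module.End.mem_eigenspace_iff.mp hu
        rw [Matrix.toLin'_apply] at this
        funext v
        rw [this]; rfl
      have h1 := eigen_swap hL i u
      rw [heq] at h1
      have h2 : ∑ v, B i v * (ν * u v) = ν * ∑ v, B i v * u v := by
        rw [Finset.mul_sum]
        exact Finset.sum_congr rfl fun v _ => by ring
      rw [h2] at h1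
      have h3 : (ν - lam i) * ∑ v, B i v * u v = 0 := by linarith
      rcases mul_eq_zero.mp h3 with h | h
      · exact absurd (by linarith : ν = lam i) hne
      · exact h
    obtain ⟨y, hy, z, hz, hyz⟩ := Submodule.mem_sup.mp (hU ▸ hPU)
    have hy0 : ∑ v, B i v * y v = 0 :=
      horth _ y hy (by rw [hμ1]; exact ne_of_lt (lt_of_le_of_lt hμ2nn hgt))
    have hz0 : ∑ v, B i v * z v = 0 := horth _ z hz (ne_of_lt hgt)
    have hPyz : P = fun v => y v + z v := by rw [← hyz]; rfl
    rw [hPyz]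
    simp only [mul_add, Finset.sum_add_distrib, hy0, hz0, add_zero]
  have hcd : ∀ i : V, μ i1 < lam i → c i = d i := by
    intro i hgt
    simp only [hc, hd]
    have h : ∀ v, B i v * g v = B i v * f v - B i v * P v := by
      intro v; simp only [hg]; ring
    simp only [h, Finset.sum_sub_distrib, hpz i hgt, sub_zero]
  -- Parseval identities
  have hPf : ∑ i : V, d i ^ 2 = (S.card : ℝ) := by
    have h := parseval_pair B f f
    have h2 : ∑ v, f v * f v = (S.card : ℝ) := by
      simp only [hf]
      simp [ite_mul, Finset.sum_ite_mem]
    rw [h2] at h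
    simp only [hd, pow_two]
    exact h
  have hPg : ∑ i : V, c i ^ 2 = ∑ v, g v ^ 2 := by
    have h := parseval_pair B g g
    simp only [hc, pow_two]
    exact h
  have hQ : ∑ i : V, lam i * d i ^ 2 = ∑ v, f v * ((G.lapMatrix ℝ).mulVec f) v := by
    have h := parseval_pair B f ((G.lapMatrix ℝ).mulVec f)
    rw [← h]
    refine Finset.sum_congr rfl fun i _ => ?_
    rw [eigen_swap hL i f]
    simp only [hd]
    ring
  have hQcut : ∑ v, f v * ((G.lapMatrix ℝ).mulVec f) v
      = (((S ×ˢ Sᶜ).filter fun p => G.Adj p.1 p.2).card : ℝ) := quad_eq_cut G S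
  -- the constant vector fact
  have hv0 : 0 < μ i1 → d (e i0) ^ 2 * n = (S.card : ℝ) ^ 2 := by
    intro hpos
    set w : V → ℝ := fun i => ∑ v, B i v with hw
    have hw0 : ∀ i : V, i ≠ e i0 → w i = 0 := by
      intro i hi
      have h1 := eigen_swap hL i (fun _ => (1:ℝ))
      rw [SimpleGraph.lapMatrix_mulVec_const_eq_zero] at h1
      simp only [Pi.zero_apply, mul_zero, Finset.sum_const_zero, mul_one] at h1
      have hlp : 0 < lam i := lt_of_lt_of_le hpos (hlamge i hi)
      have h2 := (mul_eq_zero.mp h1.symm).resolve_left (ne_of_gt hlp)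
      simp only [hw]; exact h2
    have hwn : ∑ i : V, w i ^ 2 = n := by
      have h := parseval_pair B (fun _ => (1:ℝ)) (fun _ => (1:ℝ))
      simp only [mul_one] at h
      rw [hn]
      simp only [Finset.sum_const, nsmul_eq_mul, mul_one, Finset.card_univ] at h
      rw [← h]
      exact Finset.sum_congr rfl fun i _ => by simp only [hw]; ring
    have hwd : ∑ i : V, w i * d i = (S.card : ℝ) := by
      have h := parseval_pair B (fun _ => (1:ℝ)) f
      simp only [mul_one, one_mul] at h
      have h2 : ∑ v, f v = (S.card : ℝ) := by rw [hf]; simp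
      rw [h2] at h
      rw [← h]
    have hwn' : w (e i0) ^ 2 = n := by
      rw [← hwn]
      refine (Finset.sum_eq_single_of_mem (f := fun i => w i ^ 2) (e i0)
        (Finset.mem_univ _) ?_).symm
      intro i _ hi; show w i ^ 2 = 0; rw [hw0 i hi]; ring
    have hwd' : w (e i0) * d (e i0) = (S.card : ℝ) := by
      rw [← hwd]
      refine (Finset.sum_eq_single_of_mem (f := fun i => w i * d i) (e i0)
        (Finset.mem_univ _) ?_).symm
      intro i _ hi; show w i * d i = 0; rw [hw0 i hi, zero_mul]
    calc d (e i0) ^ 2 * n = d (e i0) ^ 2 * w (e i0) ^ 2 := by rw [hwn']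
      _ = (w (e i0) * d (e i0)) ^ 2 := by ring
      _ = (S.card : ℝ) ^ 2 := by rw [hwd']
  -- main termwise inequality
  have hmain : μ i1 * (S.card : ℝ) + (μ M - μ i1) * ∑ v, g v ^ 2
      ≤ (∑ i : V, lam i * d i ^ 2) + μ i1 * d (e i0) ^ 2 := by
    rw [← hPf, ← hPg, Finset.mul_sum, Finset.mul_sum, ← Finset.sum_add_distrib]
    have hrhs : μ i1 * d (e i0) ^ 2 = ∑ i : V, if i = e i0 then μ i1 * d i ^ 2 else 0 := by
      rw [Finset.sum_ite_eq' Finset.univ (e i0) (fun i => μ i1 * d i ^ 2)]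
      simp
    rw [hrhs, ← Finset.sum_add_distrib]
    refine Finset.sum_le_sum fun i _ => ?_
    by_cases hi : i = e i0
    · subst hi
      rw [if_pos rfl, hlam0, hcz _ (by rw [hlam0]; exact hμ2nn)]
      ring_nf
      nlinarith [sq_nonneg (d (e i0))]
    · rw [if_neg hi, add_zero]
      rcases le_or_gt (lam i) (μ i1) with hle | hgt
      · have h1 : lam i = μ i1 := le_antisymm hle (hlamge i hi)
        rw [hcz i hle, h1]
        ring_nf
        exact le_refl _
      · rw [hcd i hgt]
        have h2 := hMge i hgt
        nlinarith [sq_nonneg (d i)]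
  -- combine
  have hcompl : (Sᶜ.card : ℝ) = n - (S.card : ℝ) := by
    rw [Finset.card_compl, hn]
    have := Finset.card_le_univ S
    push_cast [Nat.cast_sub (by simpa using this)]
    ring
  have hQle : ∑ i : V, lam i * d i ^ 2
      ≤ μ i1 * (S.card : ℝ) * (n - (S.card : ℝ)) / n + γ * (S.card : ℝ) := by
    rw [hQ, hQcut]
    calc (((S ×ˢ Sᶜ).filter fun p => G.Adj p.1 p.2).card : ℝ)
        ≤ μ i1 * S.card * Sᶜ.card / Fintype.card V + γ * S.card := hedge
      _ = μ i1 * (S.card : ℝ) * (n - (S.card : ℝ)) / n + γ * (S.card : ℝ) := by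
          rw [hcompl, hn]
  have hv0le : μ i1 * d (e i0) ^ 2 ≤ μ i1 * ((S.card : ℝ) ^ 2 / n) := by
    rcases eq_or_lt_of_le hμ2nn with h | h
    · rw [← h]; ring_nf; exact le_refl _
    · have := hv0 h
      have hd2 : d (e i0) ^ 2 = (S.card : ℝ) ^ 2 / n := by
        field_simp
        linarith [this]
      rw [hd2]
  have hkey : (μ M - μ i1) * ∑ v, g v ^ 2 ≤ γ * (S.card : ℝ) := by
    have hid : μ i1 * (S.card : ℝ) * (n - (S.card : ℝ)) / n + μ i1 * ((S.card : ℝ) ^ 2 / n)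
        = μ i1 * (S.card : ℝ) := by
      rw [← mul_div_assoc, ← add_div, div_eq_iff hn0.ne']
      ring
    linarith [hmain, hQle, hv0le, hid]
  -- finish
  have hq : 0 < μ M - μ i1 := sub_pos.mpr hMgt
  have hgnn : 0 ≤ ∑ v, g v ^ 2 := Finset.sum_nonneg fun v _ => sq_nonneg _
  have hNle : ∑ v, g v ^ 2 ≤ γ * (S.card : ℝ) / (μ M - μ i1) :=
    (le_div_iff₀ hq).mpr (by linarith [hkey])
  calc (1 / n) * ∑ v, g v ^ 2
      ≤ (1 / n) * (γ * (S.card : ℝ) / (μ M - μ i1)) := by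
        apply mul_le_mul_of_nonneg_left hNle
        positivity
    _ = γ / (μ M - μ i1) * ((S.card : ℝ) / n) := by ring
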